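/- If (x, y, B, k) is a digital anomaly, then there exist unique positive integers t, m, n with m > n and gcd(m, n) = 1 such that x = t·m·(m − n)², y² = t·n·(m − n)², and B^(2k) = m²·t·n (equivalently, (x, y, B^k) = (t·m·(m−n)², √(tn)·(m−n), m·√(tn))); moreover these parameters satisfy t·(m − n)⁴ < n and n^(k−1) ≤ m²·t^(k+1)·(m − n)^(4k). -/

import Mathlib

/-- Positive integers (x, y, B, k) form a digital anomaly if x/y = y + x/B^k
as rational numbers, B ≥ 2, and B^(k-1) ≤ x < B^k. -/
def IsDigitalAnomaly (x y B k : ℕ) : Prop :=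
  0 < x ∧ 0 < y ∧ 2 ≤ B ∧ 0 < k ∧
    (x : ℚ) / y = y + x / B ^ k ∧ B ^ (k - 1) ≤ x ∧ x < B ^ k

/-- If (x, y, B, k) is a digital anomaly, then there exist unique
positive integers t, m, n with m > n, gcd(m, n) = 1 such that
x = t·m·(m − n)², y² = t·n·(m − n)², B^(2k) = m²·t·n; moreover
t·(m − n)⁴ < n and n^(k−1) ≤ m²·t^(k+1)·(m − n)^(4k). -/
theorem digitalAnomaly_param (x y B k : ℕ) (h : IsDigitalAnomaly x y B k) :
    (∃! tmn : ℕ × ℕ × ℕ,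
      0 < tmn.1 ∧ 0 < tmn.2.1 ∧ 0 < tmn.2.2 ∧
      tmn.2.2 < tmn.2.1 ∧ Nat.Coprime tmn.2.1 tmn.2.2 ∧
      x = tmn.1 * tmn.2.1 * (tmn.2.1 - tmn.2.2) ^ 2 ∧
      y ^ 2 = tmn.1 * tmn.2.2 * (tmn.2.1 - tmn.2.2) ^ 2 ∧
      B ^ (2 * k) = tmn.2.1 ^ 2 * tmn.1 * tmn.2.2) ∧
    (∀ t m n : ℕ, 0 < t → 0 < m → 0 < n → n < m → Nat.Coprime m n →
      x = t * m * (m - n) ^ 2 → y ^ 2 = t * n * (m - n) ^ 2 →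
      B ^ (2 * k) = m ^ 2 * t * n →
      t * (m - n) ^ 4 < n ∧ n ^ (k - 1) ≤ m ^ 2 * t ^ (k + 1) * (m - n) ^ (4 * k)) := by
  obtain ⟨hx, hy, hB, hk, heq, hlow, hhigh⟩ := h
  set N := B ^ k with hNdef
  have hN0 : 0 < N := Nat.pow_pos (n := k) (by omega : 0 < B)
  -- clear denominators
  have key : x * N = y * y * N + x * y := by
    have hy0 : (y : ℚ) ≠ 0 := by positivity
    have hB0 : ((B : ℚ)) ^ k ≠ 0 := by positivity
    rw [hNdef]
    field_simp at heq
    have : (x : ℚ) * B ^ k = y * y * B ^ k + x * y := by linear_combination heq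
    exact_mod_cast this
  have hyN : y < N := by
    have h1 : x * y < x * N := by
      have : 0 < y * y * N := by positivity
      omega
    exact Nat.lt_of_mul_lt_mul_left h1
  have hmain : x * (N - y) = y * y * N := by
    rw [Nat.mul_sub]; omega
  have hNy0 : 0 < N - y := by omega
  set g := Nat.gcd N (N - y) with hgdef
  have hg0 : 0 < g := Nat.gcd_pos_of_pos_left _ hN0
  set m := N / g with hmdef
  set n := (N - y) / g with hndef
  have hgm : g * m = N := Nat.mul_div_cancel' (Nat.gcd_dvd_left _ _)
  have hgn : g * n = N - y := Nat.mul_div_cancel' (Nat.gcd_dvd_right _ _)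
  have hcop : Nat.Coprime m n := Nat.coprime_div_gcd_div_gcd hg0
  clear_value N g m n
  have hm0 : 0 < m := by
    rcases Nat.eq_zero_or_pos m with h0 | h0
    · rw [h0, mul_zero] at hgm; omega
    · exact h0
  have hn0 : 0 < n := by
    rcases Nat.eq_zero_or_pos n with h0 | h0
    · rw [h0, mul_zero] at hgn; omega
    · exact h0
  have hnm : n < m := by
    have : g * n < g * m := by omega
    exact Nat.lt_of_mul_lt_mul_left this
  have hy' : y = g * (m - n) := by
    have h4 : g * (m - n) = g * m - g * n := Nat.mul_sub g m n
    omega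
  -- x * n = g^2 * m * (m-n)^2
  have h2 : x * n = g ^ 2 * m * (m - n) ^ 2 := by
    refine Nat.eq_of_mul_eq_mul_left hg0 ?_
    calc g * (x * n) = x * (g * n) := by ring
      _ = y * y * N := by rw [hgn, hmain]
      _ = (g * (m - n)) * (g * (m - n)) * (g * m) := by rw [← hy', hgm]
      _ = g * (g ^ 2 * m * (m - n) ^ 2) := by ring
  have hcopnp : Nat.Coprime n (m - n) :=
    ((Nat.coprime_sub_self_left hnm.le).mpr hcop).symm
  have hndvd : n ∣ g ^ 2 := by
    have h3 : n ∣ g ^ 2 * (m * (m - n) ^ 2) := by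
      refine ⟨x, ?_⟩
      calc g ^ 2 * (m * (m - n) ^ 2) = g ^ 2 * m * (m - n) ^ 2 := by ring
        _ = x * n := h2.symm
        _ = n * x := by ring
    exact (Nat.Coprime.dvd_of_dvd_mul_right
      (Nat.Coprime.mul_right hcop.symm (hcopnp.pow_right 2)) h3)
  set t := g ^ 2 / n with htdef
  have htn : t * n = g ^ 2 := Nat.div_mul_cancel hndvd
  clear_value t
  have hg2 : 0 < g ^ 2 := by positivity
  have ht0 : 0 < t := by
    rcases Nat.eq_zero_or_pos t with h0 | h0
    · rw [h0, zero_mul] at htn; omega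
    · exact h0
  have hxeq : x = t * m * (m - n) ^ 2 := by
    refine Nat.eq_of_mul_eq_mul_right hn0 ?_
    calc x * n = g ^ 2 * m * (m - n) ^ 2 := h2
      _ = (t * n) * m * (m - n) ^ 2 := by rw [htn]
      _ = t * m * (m - n) ^ 2 * n := by ring
  have hyeq : y ^ 2 = t * n * (m - n) ^ 2 := by
    rw [hy']
    calc (g * (m - n)) ^ 2 = g ^ 2 * (m - n) ^ 2 := by ring
      _ = (t * n) * (m - n) ^ 2 := by rw [htn]
      _ = t * n * (m - n) ^ 2 := by ring
  have hN2 : B ^ (2 * k) = N ^ 2 := by rw [hNdef]; ring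
  have hBeq : B ^ (2 * k) = m ^ 2 * t * n := by
    rw [hN2, ← hgm]
    calc (g * m) ^ 2 = g ^ 2 * m ^ 2 := by ring
      _ = (t * n) * m ^ 2 := by rw [htn]
      _ = m ^ 2 * t * n := by ring
  constructor
  · refine ⟨(t, m, n), ⟨ht0, hm0, hn0, hnm, hcop, hxeq, hyeq, hBeq⟩, ?_⟩
    rintro ⟨t', m', n'⟩ ⟨ht', hm', hn', hlt', hcop', hx', hy'', hB'⟩
    simp only at ht' hm' hn' hlt' hcop' hx' hy'' hB' ⊢
    -- m' ∣ N
    have hmdvd : m' ∣ N := by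
      have hdvd2 : m' ^ 2 ∣ N ^ 2 := ⟨t' * n', by rw [← hN2, hB']; ring⟩
      exact (Nat.pow_dvd_pow_iff (by norm_num)).mp hdvd2
    obtain ⟨g', hg'⟩ := hmdvd
    have hg'0 : 0 < g' := by
      rcases Nat.eq_zero_or_pos g' with h0 | h0
      · exfalso
        rw [h0, mul_zero] at hg'
        omega
      · exact h0
    have htn' : t' * n' = g' ^ 2 := by
      refine Nat.eq_of_mul_eq_mul_left (show 0 < m' ^ 2 by positivity) ?_
      calc m' ^ 2 * (t' * n') = m' ^ 2 * t' * n' := by ring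
        _ = N ^ 2 := by rw [← hN2, hB']
        _ = (m' * g') ^ 2 := by rw [hg']
        _ = m' ^ 2 * (g' ^ 2) := by ring
    have hyg' : y = g' * (m' - n') := by
      have hsq : y ^ 2 = (g' * (m' - n')) ^ 2 := by
        calc y ^ 2 = t' * n' * (m' - n') ^ 2 := hy''
          _ = g' ^ 2 * (m' - n') ^ 2 := by rw [htn']
          _ = (g' * (m' - n')) ^ 2 := by ring
      exact Nat.pow_left_injective (by norm_num) hsq
    have hNy' : N - y = g' * n' := by
      have h5 : g' * (m' - n') = g' * m' - g' * n' := Nat.mul_sub g' m' n'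
      have h6 : g' * n' ≤ g' * m' := Nat.mul_le_mul_left g' hlt'.le
      rw [hyg', hg', mul_comm m' g']
      omega
    have hgg' : g = g' := by
      rw [hgdef, hNy', hg', mul_comm m' g', Nat.gcd_mul_left, hcop', mul_one]
    have hmm : m' = m := by
      refine Nat.eq_of_mul_eq_mul_left hg0 ?_
      rw [hgm, hg', hgg']
      ring
    have hnn : n' = n := by
      refine Nat.eq_of_mul_eq_mul_left hg0 ?_
      rw [hgn, hNy', hgg']
    have htt : t' = t := by
      have e1 : t' * n' = t * n' := by
        rw [htn', ← hgg', hnn, ← htn]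
      exact Nat.eq_of_mul_eq_mul_right hn' e1
    exact Prod.ext htt (Prod.ext hmm hnn)
  · -- inequalities
    rintro t' m' n' ht' hm' hn' hlt' hcop' hx' hy'' hB'
    set p' := m' - n' with hp'def
    have hp'0 : 0 < p' := by omega
    obtain ⟨j, rfl⟩ : ∃ j, k = j + 1 := ⟨k - 1, by omega⟩
    constructor
    · have hx2 : x ^ 2 < N ^ 2 := Nat.pow_lt_pow_left hhigh (by norm_num)
      have h7 : m' ^ 2 * t' * (t' * p' ^ 4) < m' ^ 2 * t' * n' := by
        calc m' ^ 2 * t' * (t' * p' ^ 4) = (t' * m' * p' ^ 2) ^ 2 := by ring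
          _ = x ^ 2 := by rw [hx']
          _ < N ^ 2 := hx2
          _ = B ^ (2 * (j + 1)) := hN2.symm
          _ = m' ^ 2 * t' * n' := hB'
      exact Nat.lt_of_mul_lt_mul_left h7
    · have hlowk : B ^ j ≤ x := by simpa using hlow
      have h8 : (B ^ j) ^ (2 * (j + 1)) ≤ x ^ (2 * (j + 1)) :=
        Nat.pow_le_pow_left hlowk _
      have h9 : (m' ^ 2 * t' * n') ^ j ≤ x ^ (2 * (j + 1)) := by
        calc (m' ^ 2 * t' * n') ^ j = (B ^ (2 * (j + 1))) ^ j := by rw [hB']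
          _ = (B ^ j) ^ (2 * (j + 1)) := by rw [← pow_mul, ← pow_mul, mul_comm]
          _ ≤ x ^ (2 * (j + 1)) := h8
      have h10 : (m' ^ 2 * t') ^ j * n' ^ j ≤
          (m' ^ 2 * t') ^ j * (m' ^ 2 * t' ^ (j + 2) * p' ^ (4 * (j + 1))) := by
        calc (m' ^ 2 * t') ^ j * n' ^ j = (m' ^ 2 * t' * n') ^ j :=
              (mul_pow (m' ^ 2 * t') n' j).symm
          _ ≤ x ^ (2 * (j + 1)) := h9
          _ = (t' * m' * p' ^ 2) ^ (2 * (j + 1)) := by rw [hx']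
          _ = (m' ^ 2 * t') ^ j * (m' ^ 2 * t' ^ (j + 2) * p' ^ (4 * (j + 1))) := by
              ring
      have h11 : n' ^ j ≤ m' ^ 2 * t' ^ (j + 2) * p' ^ (4 * (j + 1)) :=
        Nat.le_of_mul_le_mul_left h10 (by positivity)
      simpa using h11
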